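/- Let d ≥ 1, let D ⊆ ℝ^d be a bounded measurable set, and let s_1, …, s_N ∈ ℝ^d be pairwise distinct. Then for each i = 1, …, N the map ℝ^N → ℝ given by ψ ↦ vol(V_i(s,ψ)) is continuous on all of ℝ^N. -/

import Mathlib

open MeasureTheory

noncomputable section

/-- The Laguerre cell `Lag_i(s, ψ)` of the diagram of the domain `D` generated by the
seed points `s` and weights `ψ`. -/
def Lag {d N : ℕ} (D : Set (EuclideanSpace ℝ (Fin d)))
    (s : Fin N → EuclideanSpace ℝ (Fin d)) (ψ : Fin N → ℝ) (i : Fin N) :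
    Set (EuclideanSpace ℝ (Fin d)) :=
  {x | x ∈ closure D ∧ ∀ j : Fin N, j ≠ i → ‖x - s i‖ ^ 2 - ψ i ≤ ‖x - s j‖ ^ 2 - ψ j}

/-- The modified Laguerre cell `V_i(s, ψ)`: the Laguerre cell intersected with the
closed ball of center `s i` and radius `√(ψ i)`. -/
def Vcell {d N : ℕ} (D : Set (EuclideanSpace ℝ (Fin d)))
    (s : Fin N → EuclideanSpace ℝ (Fin d)) (ψ : Fin N → ℝ) (i : Fin N) :
    Set (EuclideanSpace ℝ (Fin d)) :=
  Lag D s ψ i ∩ {x | ‖x - s i‖ ^ 2 ≤ ψ i}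

/-- The void cell `V_0(s, ψ)`. -/
def Vvoid {d N : ℕ} (D : Set (EuclideanSpace ℝ (Fin d)))
    (s : Fin N → EuclideanSpace ℝ (Fin d)) (ψ : Fin N → ℝ) :
    Set (EuclideanSpace ℝ (Fin d)) :=
  {x | x ∈ closure D ∧ ∀ i : Fin N, 0 ≤ ‖x - s i‖ ^ 2 - ψ i}

/-- The Kantorovich functional `K(s, ν, ψ)`. -/
def Kfun {d N : ℕ} (D : Set (EuclideanSpace ℝ (Fin d)))
    (s : Fin N → EuclideanSpace ℝ (Fin d)) (ν ψ : Fin N → ℝ) : ℝ :=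
  (∑ i, ∫ x in Vcell D s ψ i, (‖x - s i‖ ^ 2 - ψ i)) + ∑ i, ν i * ψ i

open Filter Topology

section Aux

variable {d : ℕ}


lemma vol_inner_level (v : EuclideanSpace ℝ (Fin d)) (hv : v ≠ 0) (c : ℝ) :
    volume {x : EuclideanSpace ℝ (Fin d) | inner ℝ x v = c} = 0 := by
  set K : Submodule ℝ (EuclideanSpace ℝ (Fin d)) :=
    LinearMap.ker ((innerSL ℝ v : EuclideanSpace ℝ (Fin d) →L[ℝ] ℝ) : EuclideanSpace ℝ (Fin d) →ₗ[ℝ] ℝ) with hK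
  have hKne : K ≠ ⊤ := by
    intro h
    have hvK : v ∈ K := h ▸ Submodule.mem_top
    have : (inner ℝ v v : ℝ) = 0 := hvK
    exact hv (inner_self_eq_zero.mp this)
  have hK0 : volume (K : Set (EuclideanSpace ℝ (Fin d))) = 0 :=
    Measure.addHaar_submodule volume K hKne
  set x0 : EuclideanSpace ℝ (Fin d) := (c / (inner ℝ v v : ℝ)) • v with hx0
  have hvv : (inner ℝ v v : ℝ) ≠ 0 := fun h => hv (inner_self_eq_zero.mp h)
  have hx0v : (inner ℝ x0 v : ℝ) = c := by
    rw [hx0, real_inner_smul_left, div_mul_cancel₀ _ hvv]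
  have hset : {x : EuclideanSpace ℝ (Fin d) | inner ℝ x v = c}
      = (fun y => y + -x0) ⁻¹' (K : Set _) := by
    ext x
    simp only [Set.mem_setOf_eq, Set.mem_preimage, SetLike.mem_coe, hK,
      LinearMap.mem_ker, ContinuousLinearMap.coe_coe, innerSL_apply_apply, inner_add_right,
      inner_neg_right]
    have h1 : (inner ℝ v x : ℝ) = inner ℝ x v := real_inner_comm x v
    have h2 : (inner ℝ v x0 : ℝ) = c := by rw [real_inner_comm]; exact hx0v
    constructor <;> intro h <;> linarith
  rw [hset, measure_preimage_add_right volume (-x0)]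
  exact hK0

lemma vol_bisector (a b : EuclideanSpace ℝ (Fin d)) (hab : a ≠ b) (c : ℝ) :
    volume {x : EuclideanSpace ℝ (Fin d) | ‖x - a‖ ^ 2 - ‖x - b‖ ^ 2 = c} = 0 := by
  have key : ∀ x : EuclideanSpace ℝ (Fin d),
      ‖x - a‖ ^ 2 - ‖x - b‖ ^ 2 = 2 * (inner ℝ x (b - a) : ℝ) + (‖a‖ ^ 2 - ‖b‖ ^ 2) := by
    intro x
    rw [norm_sub_sq_real, norm_sub_sq_real, inner_sub_right]
    ring
  have hset : {x : EuclideanSpace ℝ (Fin d) | ‖x - a‖ ^ 2 - ‖x - b‖ ^ 2 = c}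
      = {x : EuclideanSpace ℝ (Fin d) | inner ℝ x (b - a) = (c - (‖a‖ ^ 2 - ‖b‖ ^ 2)) / 2} := by
    ext x
    simp only [Set.mem_setOf_eq, key x]
    constructor <;> intro h <;> linarith
  rw [hset]
  exact vol_inner_level _ (sub_ne_zero.mpr (Ne.symm hab)) _

lemma vol_sphere_level (hd : 1 ≤ d) (a : EuclideanSpace ℝ (Fin d)) (r : ℝ) :
    volume {x : EuclideanSpace ℝ (Fin d) | ‖x - a‖ ^ 2 = r} = 0 := by
  haveI : Nonempty (Fin d) := ⟨⟨0, hd⟩⟩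
  have hsub : {x : EuclideanSpace ℝ (Fin d) | ‖x - a‖ ^ 2 = r}
      ⊆ Metric.sphere a (Real.sqrt r) := by
    intro x hx
    simp only [Set.mem_setOf_eq] at hx
    simp only [Metric.mem_sphere, dist_eq_norm]
    rw [← hx, Real.sqrt_sq (norm_nonneg _)]
  exact measure_mono_null hsub (Measure.addHaar_sphere volume a _)

lemma isClosed_Vcell' {N : ℕ} (D : Set (EuclideanSpace ℝ (Fin d)))
    (s : Fin N → EuclideanSpace ℝ (Fin d)) (ψ : Fin N → ℝ) (i : Fin N) :
    IsClosed {x : EuclideanSpace ℝ (Fin d) |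
      (x ∈ closure D ∧ ∀ j : Fin N, j ≠ i → ‖x - s i‖ ^ 2 - ψ i ≤ ‖x - s j‖ ^ 2 - ψ j)
      ∧ ‖x - s i‖ ^ 2 ≤ ψ i} := by
  have hcont : ∀ j : Fin N, Continuous fun x : EuclideanSpace ℝ (Fin d) => ‖x - s j‖ ^ 2 :=
    fun j => ((continuous_id.sub continuous_const).norm.pow 2)
  have h1 : {x : EuclideanSpace ℝ (Fin d) |
      (x ∈ closure D ∧ ∀ j : Fin N, j ≠ i → ‖x - s i‖ ^ 2 - ψ i ≤ ‖x - s j‖ ^ 2 - ψ j)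
      ∧ ‖x - s i‖ ^ 2 ≤ ψ i}
      = (closure D ∩ ⋂ j : Fin N, {x | j ≠ i → ‖x - s i‖ ^ 2 - ψ i ≤ ‖x - s j‖ ^ 2 - ψ j})
        ∩ {x | ‖x - s i‖ ^ 2 ≤ ψ i} := by
    ext x
    simp only [Set.mem_setOf_eq, Set.mem_inter_iff, Set.mem_iInter]
  rw [h1]
  refine ((isClosed_closure.inter (isClosed_iInter fun j => ?_)).inter
    (isClosed_le (hcont i) continuous_const))
  by_cases hj : j = i
  · simp [hj]
  · have heq : {x : EuclideanSpace ℝ (Fin d) |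
        j ≠ i → ‖x - s i‖ ^ 2 - ψ i ≤ ‖x - s j‖ ^ 2 - ψ j}
        = {x | ‖x - s i‖ ^ 2 - ψ i ≤ ‖x - s j‖ ^ 2 - ψ j} := by
      ext x; simp [hj]
    rw [heq]
    exact isClosed_le ((hcont i).sub continuous_const) ((hcont j).sub continuous_const)


lemma isClosed_Vcell {N : ℕ} (D : Set (EuclideanSpace ℝ (Fin d)))
    (s : Fin N → EuclideanSpace ℝ (Fin d)) (ψ : Fin N → ℝ) (i : Fin N) :
    IsClosed (Vcell D s ψ i) := by
  have heq : Vcell D s ψ i = {x : EuclideanSpace ℝ (Fin d) |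
      (x ∈ closure D ∧ ∀ j : Fin N, j ≠ i → ‖x - s i‖ ^ 2 - ψ i ≤ ‖x - s j‖ ^ 2 - ψ j)
      ∧ ‖x - s i‖ ^ 2 ≤ ψ i} := by
    ext x
    simp [Vcell, Lag, Set.mem_inter_iff, Set.mem_setOf_eq]
  rw [heq]
  exact isClosed_Vcell' D s ψ i

lemma Vcell_subset_closure {N : ℕ} (D : Set (EuclideanSpace ℝ (Fin d)))
    (s : Fin N → EuclideanSpace ℝ (Fin d)) (ψ : Fin N → ℝ) (i : Fin N) :
    Vcell D s ψ i ⊆ closure D := fun _ hx => hx.1.1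

end Aux

/-- The measure of each modified Laguerre cell depends continuously on the weights. -/
theorem stmt4 {d N : ℕ} (hd : 1 ≤ d)
    (D : Set (EuclideanSpace ℝ (Fin d)))
    (hDm : MeasurableSet D) (hDb : Bornology.IsBounded D)
    (s : Fin N → EuclideanSpace ℝ (Fin d)) (hs : Function.Injective s)
    (i : Fin N) :
    Continuous fun ψ : Fin N → ℝ => (volume (Vcell D s ψ i)).toReal := by
  have hBfin : volume (closure D) ≠ ⊤ := hDb.closure.measure_lt_top.ne
  apply SeqContinuous.continuous
  intro u ψ hu
  have hcoord : ∀ j : Fin N, Tendsto (fun n => u n j) atTop (𝓝 (ψ j)) :=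
    fun j => tendsto_pi_nhds.mp hu j
  have hne : volume (Vcell D s ψ i) ≠ ⊤ :=
    ne_top_of_le_ne_top hBfin (measure_mono (Vcell_subset_closure D s ψ i))
  -- the exceptional null set
  set Z : Set (EuclideanSpace ℝ (Fin d)) :=
    {x | ‖x - s i‖ ^ 2 = ψ i} ∪
      ⋃ j : Fin N, {x | j ≠ i ∧ ‖x - s i‖ ^ 2 - ‖x - s j‖ ^ 2 = ψ i - ψ j} with hZ
  have hZ0 : volume Z = 0 := by
    rw [hZ]
    refine measure_union_null (vol_sphere_level hd (s i) (ψ i)) (measure_iUnion_null fun j => ?_)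
    by_cases hj : j = i
    · have : {x : EuclideanSpace ℝ (Fin d) |
          j ≠ i ∧ ‖x - s i‖ ^ 2 - ‖x - s j‖ ^ 2 = ψ i - ψ j} = ∅ := by
        ext x; simp [hj]
      simp [this]
    · refine measure_mono_null (fun x hx => hx.2) ?_
      exact vol_bisector (s i) (s j) (hs.ne fun h => hj h.symm) (ψ i - ψ j)
  have h_lim : ∀ᵐ x : EuclideanSpace ℝ (Fin d),
      ∀ᶠ n in atTop, x ∈ Vcell D s (u n) i ↔ x ∈ Vcell D s ψ i := by
    have hZae : ∀ᵐ x : EuclideanSpace ℝ (Fin d), x ∉ Z := by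
      rw [ae_iff]
      simpa only [not_not, Set.setOf_mem_eq] using hZ0
    filter_upwards [hZae] with x hx
    have hx1 : ‖x - s i‖ ^ 2 ≠ ψ i := fun h => hx (Or.inl h)
    have hx2 : ∀ j : Fin N, j ≠ i → ‖x - s i‖ ^ 2 - ‖x - s j‖ ^ 2 ≠ ψ i - ψ j := by
      intro j hj h
      exact hx (Or.inr (Set.mem_iUnion.mpr ⟨j, hj, h⟩))
    by_cases hmem : x ∈ Vcell D s ψ i
    · obtain ⟨⟨hxD, hlag⟩, hball⟩ := hmem
      have hball' : ‖x - s i‖ ^ 2 < ψ i := lt_of_le_of_ne hball hx1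
      have hlag' : ∀ j : Fin N, j ≠ i →
          ‖x - s i‖ ^ 2 - ψ i < ‖x - s j‖ ^ 2 - ψ j := by
        intro j hj
        refine lt_of_le_of_ne (hlag j hj) fun h => hx2 j hj (by linarith)
      have hev1 : ∀ᶠ n in atTop, ‖x - s i‖ ^ 2 < u n i :=
        (hcoord i).eventually_const_lt hball'
      have hev2 : ∀ᶠ n in atTop, ∀ j : Fin N, j ≠ i →
          ‖x - s i‖ ^ 2 - u n i < ‖x - s j‖ ^ 2 - u n j := by
        rw [eventually_all]
        intro j
        by_cases hj : j = i
        · exact Eventually.of_forall fun n h => absurd hj h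
        · have htd : Tendsto (fun n => (‖x - s i‖ ^ 2 - u n i) - (‖x - s j‖ ^ 2 - u n j))
              atTop (𝓝 ((‖x - s i‖ ^ 2 - ψ i) - (‖x - s j‖ ^ 2 - ψ j))) :=
            (tendsto_const_nhds.sub (hcoord i)).sub (tendsto_const_nhds.sub (hcoord j))
          have := htd.eventually_lt_const (sub_neg.mpr (hlag' j hj))
          filter_upwards [this] with n hn _
          linarith [hn]
      filter_upwards [hev1, hev2] with n h1 h2
      exact iff_of_true ⟨⟨hxD, fun j hj => (h2 j hj).le⟩, h1.le⟩ ⟨⟨hxD, hlag⟩, hball⟩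
    · by_cases hxD : x ∈ closure D
      · by_cases hball : ‖x - s i‖ ^ 2 ≤ ψ i
        · have hnl : ¬ (∀ j : Fin N, j ≠ i →
              ‖x - s i‖ ^ 2 - ψ i ≤ ‖x - s j‖ ^ 2 - ψ j) := by
            intro h
            exact hmem ⟨⟨hxD, h⟩, hball⟩
          push_neg at hnl
          obtain ⟨j, hj, hlt⟩ := hnl
          have htd : Tendsto (fun n => (‖x - s j‖ ^ 2 - u n j) - (‖x - s i‖ ^ 2 - u n i))
              atTop (𝓝 ((‖x - s j‖ ^ 2 - ψ j) - (‖x - s i‖ ^ 2 - ψ i))) :=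
            (tendsto_const_nhds.sub (hcoord j)).sub (tendsto_const_nhds.sub (hcoord i))
          have hev := htd.eventually_lt_const (sub_neg.mpr hlt)
          filter_upwards [hev] with n hn
          refine iff_of_false (fun h => ?_) hmem
          have := h.1.2 j hj
          linarith
        · push_neg at hball
          have hev := (hcoord i).eventually_lt_const hball
          filter_upwards [hev] with n hn
          refine iff_of_false (fun h => ?_) hmem
          exact absurd h.2 (not_le.mpr hn)
      · refine Eventually.of_forall fun n => iff_of_false (fun h => hxD h.1.1) hmem
  have key : Tendsto (fun n => volume (Vcell D s (u n) i)) atTop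
      (𝓝 (volume (Vcell D s ψ i))) := by
    refine tendsto_measure_of_ae_tendsto_indicator atTop
      (isClosed_Vcell D s ψ i).measurableSet
      (fun n => (isClosed_Vcell D s (u n) i).measurableSet)
      isClosed_closure.measurableSet hBfin
      (Eventually.of_forall fun n => Vcell_subset_closure D s (u n) i) h_lim
  exact (ENNReal.tendsto_toReal hne).comp key
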